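/- Let T ∈ V₁ ⊗ V₂ ⊗ V₃ be a binding tensor over ℂ with dim V₁ = dim V₂ = dim V₃ = n. Then the border rank of T is at most n if and only if T is equivalent to the structure tensor of a smoothable algebra, i.e., if and only if there exists a unital bilinear map φ on ℂⁿ lying in the closure of the GL(ℂⁿ)-orbit {(x, y) ↦ g(μ(g⁻¹x, g⁻¹y)) : g ∈ GL(ℂⁿ)} of the coordinatewise multiplication μ(x, y) = (x₁y₁, …, xₙyₙ) of ℂⁿ, such that the structure tensor of φ in (ℂⁿ)* ⊗ (ℂⁿ)* ⊗ ℂⁿ is equivalent to T. -/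

import Mathlib

open scoped BigOperators

/-- A 2-tensor (matrix) is a sum of `r` decomposable tensors. -/
def mrankLE {p m : ℕ} (M : Fin p → Fin m → ℂ) (r : ℕ) : Prop :=
  ∃ v : Fin r → Fin p → ℂ, ∃ w : Fin r → Fin m → ℂ,
    M = fun j k => ∑ s, v s j * w s k

/-- The rank of a 2-tensor. -/
noncomputable def mrank {p m : ℕ} (M : Fin p → Fin m → ℂ) : ℕ :=
  sInf {r | mrankLE M r}

/-- `T'` is a restriction of `T`: `T' = (F₁ ⊗ F₂ ⊗ F₃) T`. -/
def Restriction {n₁ n₂ n₃ m₁ m₂ m₃ : ℕ}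
    (T' : Fin m₁ → Fin m₂ → Fin m₃ → ℂ) (T : Fin n₁ → Fin n₂ → Fin n₃ → ℂ) : Prop :=
  ∃ F₁ : Matrix (Fin m₁) (Fin n₁) ℂ, ∃ F₂ : Matrix (Fin m₂) (Fin n₂) ℂ,
    ∃ F₃ : Matrix (Fin m₃) (Fin n₃) ℂ,
      T' = fun i j k => ∑ a, ∑ b, ∑ c, F₁ i a * F₂ j b * F₃ k c * T a b c

/-- Two tensors are equivalent if each is a restriction of the other. -/
def EquivTensor {n₁ n₂ n₃ m₁ m₂ m₃ : ℕ}
    (T' : Fin m₁ → Fin m₂ → Fin m₃ → ℂ) (T : Fin n₁ → Fin n₂ → Fin n₃ → ℂ) : Prop :=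
  Restriction T' T ∧ Restriction T T'

/-- A tensor of format `n × n × n` is binding if some contraction of its first
factor and some contraction of its second factor both have rank `n`. -/
def Binding {n : ℕ} (T : Fin n → Fin n → Fin n → ℂ) : Prop :=
  (∃ α₁ : Fin n → ℂ, mrank (fun j k => ∑ i, α₁ i * T i j k) = n) ∧
  (∃ α₂ : Fin n → ℂ, mrank (fun i k => ∑ j, α₂ j * T i j k) = n)

/-- `T` is a sum of `r` decomposable tensors (i.e. has rank at most `r`). -/
def rankLE {n₁ n₂ n₃ : ℕ} (T : Fin n₁ → Fin n₂ → Fin n₃ → ℂ) (r : ℕ) : Prop :=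
  ∃ u : Fin r → Fin n₁ → ℂ, ∃ v : Fin r → Fin n₂ → ℂ, ∃ w : Fin r → Fin n₃ → ℂ,
    T = fun i j k => ∑ s, u s i * v s j * w s k

/-- The border rank of a tensor. -/
noncomputable def bRank {n₁ n₂ n₃ : ℕ} (T : Fin n₁ → Fin n₂ → Fin n₃ → ℂ) : ℕ :=
  sInf {r | T ∈ closure {S | rankLE S r}}

/-- The bilinear map induced by a structure-constant array `μ`. -/
noncomputable def mulOf {n : ℕ} (μ : Fin n → Fin n → Fin n → ℂ)
    (x y : Fin n → ℂ) : Fin n → ℂ :=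
  fun k => ∑ i, ∑ j, μ i j k * x i * y j

/-- A bilinear map is unital if it has a two-sided identity element. -/
def IsUnitalBil {n : ℕ} (μ : Fin n → Fin n → Fin n → ℂ) : Prop :=
  ∃ e : Fin n → ℂ, ∀ x : Fin n → ℂ, mulOf μ e x = x ∧ mulOf μ x e = x

/-- Coordinatewise multiplication of `ℂⁿ` as a structure-constant array. -/
noncomputable def diagMul (n : ℕ) : Fin n → Fin n → Fin n → ℂ :=
  fun i j k => if i = j ∧ j = k then 1 else 0

/-- The `GL(ℂⁿ)`-orbit `{(x, y) ↦ g (μ (g⁻¹ x, g⁻¹ y)) : g ∈ GL(ℂⁿ)}`. -/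
def BilOrbit {n : ℕ} (μ : Fin n → Fin n → Fin n → ℂ) :
    Set (Fin n → Fin n → Fin n → ℂ) :=
  {S | ∃ g : GL (Fin n) ℂ,
    S = fun i j k => ∑ a, ∑ b, ∑ c,
      (↑g⁻¹ : Matrix (Fin n) (Fin n) ℂ) a i *
      (↑g⁻¹ : Matrix (Fin n) (Fin n) ℂ) b j *
      (↑g : Matrix (Fin n) (Fin n) ℂ) k c * μ a b c}


namespace AuxBL

noncomputable section

open Matrix Filter

variable {n₁ n₂ n₃ m₁ m₂ m₃ p₁ p₂ p₃ n r r' : ℕ}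

/-! ### Single-slot restriction operations -/

def r1 (F : Matrix (Fin m₁) (Fin n₁) ℂ) (T : Fin n₁ → Fin n₂ → Fin n₃ → ℂ) :
    Fin m₁ → Fin n₂ → Fin n₃ → ℂ := fun i j k => ∑ a, F i a * T a j k

def r2 (F : Matrix (Fin m₂) (Fin n₂) ℂ) (T : Fin n₁ → Fin n₂ → Fin n₃ → ℂ) :
    Fin n₁ → Fin m₂ → Fin n₃ → ℂ := fun i j k => ∑ b, F j b * T i b k

def r3 (F : Matrix (Fin m₃) (Fin n₃) ℂ) (T : Fin n₁ → Fin n₂ → Fin n₃ → ℂ) :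
    Fin n₁ → Fin n₂ → Fin m₃ → ℂ := fun i j k => ∑ c, F k c * T i j c

def restrict3 (F₁ : Matrix (Fin m₁) (Fin n₁) ℂ)
    (F₂ : Matrix (Fin m₂) (Fin n₂) ℂ) (F₃ : Matrix (Fin m₃) (Fin n₃) ℂ)
    (T : Fin n₁ → Fin n₂ → Fin n₃ → ℂ) : Fin m₁ → Fin m₂ → Fin m₃ → ℂ :=
  fun i j k => ∑ a, ∑ b, ∑ c, F₁ i a * F₂ j b * F₃ k c * T a b c

lemma restrict3_eq (F₁ : Matrix (Fin m₁) (Fin n₁) ℂ)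
    (F₂ : Matrix (Fin m₂) (Fin n₂) ℂ) (F₃ : Matrix (Fin m₃) (Fin n₃) ℂ)
    (T : Fin n₁ → Fin n₂ → Fin n₃ → ℂ) :
    restrict3 F₁ F₂ F₃ T = r1 F₁ (r2 F₂ (r3 F₃ T)) := by
  funext i j k
  simp only [restrict3, r1, r2, r3, Finset.mul_sum]
  exact Finset.sum_congr rfl fun a _ => Finset.sum_congr rfl fun b _ =>
    Finset.sum_congr rfl fun c _ => by ring

lemma r1_one (T : Fin n₁ → Fin n₂ → Fin n₃ → ℂ) : r1 1 T = T := by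
  funext i j k; simp [r1, Matrix.one_apply]
lemma r2_one (T : Fin n₁ → Fin n₂ → Fin n₃ → ℂ) : r2 1 T = T := by
  funext i j k; simp [r2, Matrix.one_apply]
lemma r3_one (T : Fin n₁ → Fin n₂ → Fin n₃ → ℂ) : r3 1 T = T := by
  funext i j k; simp [r3, Matrix.one_apply]

lemma r1_r1 (F : Matrix (Fin p₁) (Fin m₁) ℂ) (G : Matrix (Fin m₁) (Fin n₁) ℂ)
    (T : Fin n₁ → Fin n₂ → Fin n₃ → ℂ) : r1 F (r1 G T) = r1 (F * G) T := by
  funext i j k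
  simp only [r1, Matrix.mul_apply, Finset.mul_sum, Finset.sum_mul]
  rw [Finset.sum_comm]
  exact Finset.sum_congr rfl fun a _ => Finset.sum_congr rfl fun b _ => by ring

lemma r2_r2 (F : Matrix (Fin p₂) (Fin m₂) ℂ) (G : Matrix (Fin m₂) (Fin n₂) ℂ)
    (T : Fin n₁ → Fin n₂ → Fin n₃ → ℂ) : r2 F (r2 G T) = r2 (F * G) T := by
  funext i j k
  simp only [r2, Matrix.mul_apply, Finset.mul_sum, Finset.sum_mul]
  rw [Finset.sum_comm]
  exact Finset.sum_congr rfl fun a _ => Finset.sum_congr rfl fun b _ => by ring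

lemma r3_r3 (F : Matrix (Fin p₃) (Fin m₃) ℂ) (G : Matrix (Fin m₃) (Fin n₃) ℂ)
    (T : Fin n₁ → Fin n₂ → Fin n₃ → ℂ) : r3 F (r3 G T) = r3 (F * G) T := by
  funext i j k
  simp only [r3, Matrix.mul_apply, Finset.mul_sum, Finset.sum_mul]
  rw [Finset.sum_comm]
  exact Finset.sum_congr rfl fun a _ => Finset.sum_congr rfl fun b _ => by ring

lemma r1_r2 (F : Matrix (Fin m₁) (Fin n₁) ℂ) (G : Matrix (Fin m₂) (Fin n₂) ℂ)
    (T : Fin n₁ → Fin n₂ → Fin n₃ → ℂ) : r1 F (r2 G T) = r2 G (r1 F T) := by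
  funext i j k
  simp only [r1, r2, Finset.mul_sum]
  rw [Finset.sum_comm]
  exact Finset.sum_congr rfl fun a _ => Finset.sum_congr rfl fun b _ => by ring

lemma r1_r3 (F : Matrix (Fin m₁) (Fin n₁) ℂ) (G : Matrix (Fin m₃) (Fin n₃) ℂ)
    (T : Fin n₁ → Fin n₂ → Fin n₃ → ℂ) : r1 F (r3 G T) = r3 G (r1 F T) := by
  funext i j k
  simp only [r1, r3, Finset.mul_sum]
  rw [Finset.sum_comm]
  exact Finset.sum_congr rfl fun a _ => Finset.sum_congr rfl fun b _ => by ring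

lemma r2_r3 (F : Matrix (Fin m₂) (Fin n₂) ℂ) (G : Matrix (Fin m₃) (Fin n₃) ℂ)
    (T : Fin n₁ → Fin n₂ → Fin n₃ → ℂ) : r2 F (r3 G T) = r3 G (r2 F T) := by
  funext i j k
  simp only [r2, r3, Finset.mul_sum]
  rw [Finset.sum_comm]
  exact Finset.sum_congr rfl fun a _ => Finset.sum_congr rfl fun b _ => by ring

lemma restrict3_comp (F₁ : Matrix (Fin p₁) (Fin m₁) ℂ) (F₂ : Matrix (Fin p₂) (Fin m₂) ℂ)
    (F₃ : Matrix (Fin p₃) (Fin m₃) ℂ)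
    (G₁ : Matrix (Fin m₁) (Fin n₁) ℂ) (G₂ : Matrix (Fin m₂) (Fin n₂) ℂ)
    (G₃ : Matrix (Fin m₃) (Fin n₃) ℂ) (T : Fin n₁ → Fin n₂ → Fin n₃ → ℂ) :
    restrict3 F₁ F₂ F₃ (restrict3 G₁ G₂ G₃ T)
      = restrict3 (F₁ * G₁) (F₂ * G₂) (F₃ * G₃) T := by
  simp only [restrict3_eq]
  rw [← r1_r3, ← r2_r3, r3_r3, ← r1_r2, r1_r1, r2_r2]

lemma restrict3_one (T : Fin n₁ → Fin n₂ → Fin n₃ → ℂ) : restrict3 1 1 1 T = T := by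
  rw [restrict3_eq, r3_one, r2_one, r1_one]

lemma restriction_restrict3 (F₁ : Matrix (Fin m₁) (Fin n₁) ℂ)
    (F₂ : Matrix (Fin m₂) (Fin n₂) ℂ) (F₃ : Matrix (Fin m₃) (Fin n₃) ℂ)
    (T : Fin n₁ → Fin n₂ → Fin n₃ → ℂ) :
    Restriction (restrict3 F₁ F₂ F₃ T) T :=
  ⟨F₁, F₂, F₃, rfl⟩

lemma restriction_iff {T' : Fin m₁ → Fin m₂ → Fin m₃ → ℂ}
    {T : Fin n₁ → Fin n₂ → Fin n₃ → ℂ} :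
    Restriction T' T ↔ ∃ F₁ F₂ F₃, T' = restrict3 F₁ F₂ F₃ T := Iff.rfl

/-! ### Rank lemmas -/

lemma r1_rankLE (F : Matrix (Fin m₁) (Fin n₁) ℂ) {T : Fin n₁ → Fin n₂ → Fin n₃ → ℂ}
    (h : rankLE T r) : rankLE (r1 F T) r := by
  obtain ⟨u, v, w, rfl⟩ := h
  exact ⟨fun s i => ∑ a, F i a * u s a, v, w, by
    funext i j k
    simp only [r1, Finset.mul_sum, Finset.sum_mul]
    rw [Finset.sum_comm]
    exact Finset.sum_congr rfl fun s _ => Finset.sum_congr rfl fun a _ => by ring⟩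

lemma r2_rankLE (F : Matrix (Fin m₂) (Fin n₂) ℂ) {T : Fin n₁ → Fin n₂ → Fin n₃ → ℂ}
    (h : rankLE T r) : rankLE (r2 F T) r := by
  obtain ⟨u, v, w, rfl⟩ := h
  exact ⟨u, fun s j => ∑ b, F j b * v s b, w, by
    funext i j k
    simp only [r2, Finset.mul_sum, Finset.sum_mul]
    rw [Finset.sum_comm]
    exact Finset.sum_congr rfl fun s _ => Finset.sum_congr rfl fun a _ => by ring⟩

lemma r3_rankLE (F : Matrix (Fin m₃) (Fin n₃) ℂ) {T : Fin n₁ → Fin n₂ → Fin n₃ → ℂ}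
    (h : rankLE T r) : rankLE (r3 F T) r := by
  obtain ⟨u, v, w, rfl⟩ := h
  exact ⟨u, v, fun s k => ∑ c, F k c * w s c, by
    funext i j k
    simp only [r3, Finset.mul_sum, Finset.sum_mul]
    rw [Finset.sum_comm]
    exact Finset.sum_congr rfl fun s _ => Finset.sum_congr rfl fun a _ => by ring⟩

lemma restrict3_rankLE (F₁ : Matrix (Fin m₁) (Fin n₁) ℂ)
    (F₂ : Matrix (Fin m₂) (Fin n₂) ℂ) (F₃ : Matrix (Fin m₃) (Fin n₃) ℂ)
    {T : Fin n₁ → Fin n₂ → Fin n₃ → ℂ} (h : rankLE T r) :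
    rankLE (restrict3 F₁ F₂ F₃ T) r := by
  rw [restrict3_eq]
  exact r1_rankLE _ (r2_rankLE _ (r3_rankLE _ h))

lemma rankLE_mono {T : Fin n₁ → Fin n₂ → Fin n₃ → ℂ} (h : rankLE T r) (hrr : r ≤ r') :
    rankLE T r' := by
  obtain ⟨d, rfl⟩ := Nat.exists_eq_add_of_le hrr
  obtain ⟨u, v, w, rfl⟩ := h
  refine ⟨Fin.append u 0, Fin.append v 0, Fin.append w 0, ?_⟩
  funext i j k
  rw [Fin.sum_univ_add]
  simp [Fin.append_left, Fin.append_right]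

lemma rankLE_total (T : Fin n₁ → Fin n₂ → Fin n₃ → ℂ) : rankLE T (n₁ * n₂ * n₃) := by
  classical
  let e : Fin n₁ × Fin n₂ × Fin n₃ ≃ Fin (n₁ * n₂ * n₃) :=
    ((Equiv.prodAssoc _ _ _).symm.trans
      ((finProdFinEquiv.prodCongr (Equiv.refl _)).trans finProdFinEquiv))
  refine ⟨fun s i => if i = (e.symm s).1 then 1 else 0,
    fun s j => if j = (e.symm s).2.1 then 1 else 0,
    fun s k => if k = (e.symm s).2.2 then T (e.symm s).1 (e.symm s).2.1 (e.symm s).2.2 else 0, ?_⟩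
  funext i j k
  rw [← Equiv.sum_comp e]
  simp only [Equiv.symm_apply_apply]
  simp [Fintype.sum_prod_type, ite_and]

/-! ### Topology -/

lemma continuous_restrict3 (F₁ : Matrix (Fin m₁) (Fin n₁) ℂ)
    (F₂ : Matrix (Fin m₂) (Fin n₂) ℂ) (F₃ : Matrix (Fin m₃) (Fin n₃) ℂ) :
    Continuous fun T : Fin n₁ → Fin n₂ → Fin n₃ → ℂ => restrict3 F₁ F₂ F₃ T := by
  unfold restrict3; fun_prop

lemma continuous_restrict3_param :
    Continuous fun p : Matrix (Fin n) (Fin n) ℂ × Matrix (Fin n) (Fin n) ℂ ×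
        (Fin n → Fin n → Fin n → ℂ) =>
      restrict3 p.1 p.2.1 (1 : Matrix (Fin n) (Fin n) ℂ) p.2.2 := by
  unfold restrict3; fun_prop

lemma mem_closure_rankLE_restrict3 (F₁ : Matrix (Fin m₁) (Fin n₁) ℂ)
    (F₂ : Matrix (Fin m₂) (Fin n₂) ℂ) (F₃ : Matrix (Fin m₃) (Fin n₃) ℂ)
    {T : Fin n₁ → Fin n₂ → Fin n₃ → ℂ}
    (h : T ∈ closure {S | rankLE S r}) :
    restrict3 F₁ F₂ F₃ T ∈ closure {S | rankLE S r} := by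
  have h1 : restrict3 F₁ F₂ F₃ T ∈
      (fun S => restrict3 F₁ F₂ F₃ S) '' closure {S | rankLE S r} :=
    Set.mem_image_of_mem _ h
  have h2 := image_closure_subset_closure_image (continuous_restrict3 F₁ F₂ F₃) h1
  refine closure_mono ?_ h2
  rintro _ ⟨S, hS, rfl⟩
  exact restrict3_rankLE _ _ _ hS

lemma bRank_le_iff {T : Fin n₁ → Fin n₂ → Fin n₃ → ℂ} :
    bRank T ≤ r ↔ T ∈ closure {S | rankLE S r} := by
  constructor
  · intro h
    have hne : Set.Nonempty {r | T ∈ closure {S | rankLE S r}} :=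
      ⟨n₁ * n₂ * n₃, subset_closure (rankLE_total T)⟩
    have hmem := Nat.sInf_mem hne
    exact closure_mono (fun S hS => rankLE_mono hS h) hmem
  · exact fun h => Nat.sInf_le h

end

end AuxBL

namespace AuxBL

noncomputable section

open Matrix Filter

variable {n : ℕ}

/-! ### `mulOf` and restriction -/

lemma mulOf_eq (μ : Fin n → Fin n → Fin n → ℂ) (x y : Fin n → ℂ) :
    mulOf μ x y
      = r1 (Matrix.of fun _ : Fin 1 => x) (r2 (Matrix.of fun _ : Fin 1 => y) μ) 0 0 := by
  funext k
  simp only [mulOf, r1, r2, Matrix.of_apply, Finset.mul_sum]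
  exact Finset.sum_congr rfl fun i _ => Finset.sum_congr rfl fun j _ => by ring

lemma row_mul_transpose (A : Matrix (Fin n) (Fin n) ℂ) (x : Fin n → ℂ) :
    (Matrix.of fun _ : Fin 1 => x) * Aᵀ = Matrix.of fun _ : Fin 1 => A.mulVec x := by
  ext s a
  simp [Matrix.mul_apply, Matrix.mulVec, dotProduct, mul_comm]

lemma mulOf_r1 (A : Matrix (Fin n) (Fin n) ℂ) (Z : Fin n → Fin n → Fin n → ℂ)
    (x y : Fin n → ℂ) : mulOf (r1 Aᵀ Z) x y = mulOf Z (A.mulVec x) y := by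
  rw [mulOf_eq, mulOf_eq, ← r1_r2, r1_r1, row_mul_transpose]

lemma mulOf_r2 (B : Matrix (Fin n) (Fin n) ℂ) (Z : Fin n → Fin n → Fin n → ℂ)
    (x y : Fin n → ℂ) : mulOf (r2 Bᵀ Z) x y = mulOf Z x (B.mulVec y) := by
  rw [mulOf_eq, mulOf_eq, r2_r2, row_mul_transpose]

/-! ### The left/right multiplication matrices -/

def Lmat (e : Fin n → ℂ) (S : Fin n → Fin n → Fin n → ℂ) : Matrix (Fin n) (Fin n) ℂ :=
  Matrix.of fun k j => ∑ i, S i j k * e i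

def Rmat (e : Fin n → ℂ) (S : Fin n → Fin n → Fin n → ℂ) : Matrix (Fin n) (Fin n) ℂ :=
  Matrix.of fun k i => ∑ j, S i j k * e j

lemma mulOf_left (S : Fin n → Fin n → Fin n → ℂ) (e y : Fin n → ℂ) :
    mulOf S e y = (Lmat e S).mulVec y := by
  funext k
  simp only [mulOf, Lmat, Matrix.mulVec, dotProduct, Matrix.of_apply,
    Finset.sum_mul]
  rw [Finset.sum_comm]

lemma mulOf_right (S : Fin n → Fin n → Fin n → ℂ) (x e : Fin n → ℂ) :
    mulOf S x e = (Rmat e S).mulVec x := by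
  funext k
  simp only [mulOf, Rmat, Matrix.mulVec, dotProduct, Matrix.of_apply,
    Finset.sum_mul]
  exact Finset.sum_congr rfl fun i _ => Finset.sum_congr rfl fun j _ => by ring

lemma Lmat_of_unital {φ : Fin n → Fin n → Fin n → ℂ} {e : Fin n → ℂ}
    (he : ∀ x, mulOf φ e x = x) : Lmat e φ = 1 := by
  ext k j
  have h1 := congrFun (he (Pi.single j 1)) k
  rw [mulOf_left] at h1
  rw [Matrix.mulVec_single] at h1
  simpa [Matrix.one_apply, Pi.single_apply] using h1

lemma Rmat_of_unital {φ : Fin n → Fin n → Fin n → ℂ} {e : Fin n → ℂ}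
    (he : ∀ x, mulOf φ x e = x) : Rmat e φ = 1 := by
  ext k i
  have h1 := congrFun (he (Pi.single i 1)) k
  rw [mulOf_right] at h1
  rw [Matrix.mulVec_single] at h1
  simpa [Matrix.one_apply, Pi.single_apply] using h1

/-- Normalizing a bilinear map with invertible one-sided multiplications
yields a unital bilinear map. -/
lemma unital_of_invertible (S : Fin n → Fin n → Fin n → ℂ) (e₁ e₂ : Fin n → ℂ)
    (hL : IsUnit (Lmat e₁ S).det) (hR : IsUnit (Rmat e₂ S).det) :
    IsUnitalBil (restrict3 ((Rmat e₂ S)⁻¹)ᵀ ((Lmat e₁ S)⁻¹)ᵀ 1 S) := by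
  have hψ : restrict3 ((Rmat e₂ S)⁻¹)ᵀ ((Lmat e₁ S)⁻¹)ᵀ 1 S
      = r1 ((Rmat e₂ S)⁻¹)ᵀ (r2 ((Lmat e₁ S)⁻¹)ᵀ S) := by
    rw [restrict3_eq, r3_one]
  refine ⟨mulOf S e₁ e₂, fun x => ⟨?_, ?_⟩⟩
  · rw [hψ, mulOf_r1, mulOf_r2,
      show mulOf S e₁ e₂ = (Rmat e₂ S).mulVec e₁ from mulOf_right S e₁ e₂,
      Matrix.mulVec_mulVec, Matrix.nonsing_inv_mul _ hR, Matrix.one_mulVec,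
      mulOf_left, Matrix.mulVec_mulVec, Matrix.mul_nonsing_inv _ hL,
      Matrix.one_mulVec]
  · rw [hψ, mulOf_r1, mulOf_r2,
      show mulOf S e₁ e₂ = (Lmat e₁ S).mulVec e₂ from mulOf_left S e₁ e₂,
      Matrix.mulVec_mulVec, Matrix.nonsing_inv_mul _ hL, Matrix.one_mulVec,
      mulOf_right, Matrix.mulVec_mulVec, Matrix.mul_nonsing_inv _ hR,
      Matrix.one_mulVec]

/-! ### The orbit of the diagonal tensor -/

lemma sum_diagMul (f : Fin n → Fin n → Fin n → ℂ) :
    ∑ a, ∑ b, ∑ c, f a b c * diagMul n a b c = ∑ s, f s s s := by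
  refine Finset.sum_congr rfl fun p _ => ?_
  rw [Finset.sum_eq_single p]
  · rw [Finset.sum_eq_single p]
    · simp [diagMul]
    · intro c _ hc; simp [diagMul, hc.symm]
    · intro hc; exact absurd (Finset.mem_univ p) hc
  · intro q _ hq
    rw [Finset.sum_eq_single q]
    · have hpq : p ≠ q := fun h1 => hq h1.symm
      simp [diagMul, hpq]
    · intro c _ hc
      have hpq : p ≠ q := fun h1 => hq h1.symm
      simp [diagMul, hpq]
    · intro hc; exact absurd (Finset.mem_univ q) hc
  · intro hc; exact absurd (Finset.mem_univ p) hc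

lemma orbit_rankLE {S : Fin n → Fin n → Fin n → ℂ}
    (hS : S ∈ BilOrbit (diagMul n)) : rankLE S n := by
  obtain ⟨g, rfl⟩ := hS
  refine ⟨fun s i => (↑g⁻¹ : Matrix (Fin n) (Fin n) ℂ) s i,
    fun s j => (↑g⁻¹ : Matrix (Fin n) (Fin n) ℂ) s j,
    fun s k => (↑g : Matrix (Fin n) (Fin n) ℂ) k s, ?_⟩
  funext i j k
  rw [sum_diagMul (fun a b c => (↑g⁻¹ : Matrix (Fin n) (Fin n) ℂ) a i *
    (↑g⁻¹ : Matrix (Fin n) (Fin n) ℂ) b j * (↑g : Matrix (Fin n) (Fin n) ℂ) k c)]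

lemma diagMul_mem_orbit : diagMul n ∈ BilOrbit (diagMul n) := by
  refine ⟨1, ?_⟩
  funext i j k
  rw [show ((1 : GL (Fin n) ℂ))⁻¹ = 1 from inv_one]
  simp only [Units.val_one]
  rw [sum_diagMul (fun a b c => (1 : Matrix (Fin n) (Fin n) ℂ) a i *
    (1 : Matrix (Fin n) (Fin n) ℂ) b j * (1 : Matrix (Fin n) (Fin n) ℂ) k c)]
  have hterm : ∀ s : Fin n, (1 : Matrix (Fin n) (Fin n) ℂ) s i *
      (1 : Matrix (Fin n) (Fin n) ℂ) s j * (1 : Matrix (Fin n) (Fin n) ℂ) k s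
      = if s = i ∧ s = j ∧ k = s then 1 else 0 := by
    intro s
    simp only [Matrix.one_apply]
    by_cases h1 : s = i <;> by_cases h2 : s = j <;> by_cases h3 : k = s <;>
      simp_all
  rw [Finset.sum_congr rfl fun s _ => hterm s]
  rw [Finset.sum_eq_single i]
  · by_cases h1 : i = j
    · subst h1
      by_cases h2 : k = i
      · subst h2; simp [diagMul]
      · simp [diagMul, h2, show ¬i = k from fun h => h2 h.symm]
    · simp [diagMul, h1]
  · intro s _ hs
    exact if_neg (fun h => hs h.1)
  · intro h
    exact absurd (Finset.mem_univ i) h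

end

end AuxBL


namespace AuxBL

noncomputable section

open Matrix

lemma isUnit_det_of_mrank_eq {n : ℕ} {M : Fin n → Fin n → ℂ} (h : mrank M = n) :
    IsUnit (Matrix.of M).det := by
  by_contra hdet
  rw [← Matrix.isUnit_iff_isUnit_det, Matrix.isUnit_iff_isUnit_det, isUnit_iff_ne_zero,
    not_not, ← Matrix.exists_vecMul_eq_zero_iff] at hdet
  obtain ⟨u, hu, huM⟩ := hdet
  obtain ⟨j₀, hj₀⟩ := Function.ne_iff.mp hu
  simp only [Pi.zero_apply] at hj₀
  cases n with
  | zero => exact j₀.elim0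
  | succ m =>
    have hle : mrankLE M m := by
      refine ⟨fun s j => (if j = j₀.succAbove s then 1 else 0)
          - (u (j₀.succAbove s) / u j₀) * (if j = j₀ then 1 else 0),
        fun s k => M (j₀.succAbove s) k, ?_⟩
      funext j k
      have hrow : ∀ k, ∑ i, u i * M i k = 0 := by
        intro k
        have := congrFun huM k
        simpa [Matrix.vecMul, dotProduct] using this
      rcases eq_or_ne j j₀ with rfl | hj
      · have hz : ∀ s : Fin m, (if j = j.succAbove s then (1:ℂ) else 0) = 0 := by
          intro s; simp [(Fin.succAbove_ne j s).symm]
        simp only [hz, eq_self_iff_true, if_true, mul_one, zero_sub, neg_mul]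
        have hsum := Fin.sum_univ_succAbove (fun i => u i * M i k) j
        rw [hrow k] at hsum
        have h3 : ∑ s : Fin m, u (j.succAbove s) * M (j.succAbove s) k
            = -(u j * M j k) := by linear_combination -hsum
        have h2 : ∑ s : Fin m, -(u (j.succAbove s) / u j * M (j.succAbove s) k)
            = -(u j)⁻¹ * ∑ s : Fin m, u (j.succAbove s) * M (j.succAbove s) k := by
          rw [Finset.mul_sum]
          exact Finset.sum_congr rfl fun s _ => by ring
        rw [h2, h3]
        field_simp
      · obtain ⟨t, ht⟩ := Fin.exists_succAbove_eq hj
        simp only [if_neg hj, mul_zero, sub_zero]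
        have : ∀ s : Fin m, (if j = j₀.succAbove s then (1:ℂ) else 0) * M (j₀.succAbove s) k
            = if t = s then M (j₀.succAbove s) k else 0 := by
          intro s
          by_cases hts : t = s
          · subst hts; simp [ht]
          · have : j ≠ j₀.succAbove s := by
              rw [← ht]; exact fun hc => hts (Fin.succAbove_right_injective hc)
            simp [this, hts]
        rw [Finset.sum_congr rfl fun s _ => this s]
        simp [ht]
    have : mrank M ≤ m := Nat.sInf_le hle
    omega

/-- A unital bilinear map that is a sum of `n` decomposables lies in the
orbit of the diagonal multiplication. -/
lemma mem_orbit_of_unital_rankLE {n : ℕ} {ψ : Fin n → Fin n → Fin n → ℂ}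
    (hU : IsUnitalBil ψ) (hr : rankLE ψ n) : ψ ∈ BilOrbit (diagMul n) := by
  classical
  obtain ⟨e, he⟩ := hU
  obtain ⟨u, v, w, hψ⟩ := hr
  have hL : ∀ j k, ∑ i, ψ i j k * e i = if k = j then 1 else 0 := by
    intro j k
    have h1 := congrFun (he (Pi.single j 1)).1 k
    simp only [mulOf, Pi.single_apply] at h1
    simpa [mul_ite, Finset.sum_ite_eq'] using h1
  have hR : ∀ i k, ∑ j, ψ i j k * e j = if k = i then 1 else 0 := by
    intro i k
    have h1 := congrFun (he (Pi.single i 1)).2 k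
    simp only [mulOf, Pi.single_apply] at h1
    rw [Finset.sum_comm] at h1
    simpa [mul_ite, mul_comm, Finset.sum_ite_eq'] using h1
  set a : Fin n → ℂ := fun s => ∑ i, u s i * e i with ha_def
  set b : Fin n → ℂ := fun s => ∑ j, v s j * e j with hb_def
  have hVW : ∀ j k, ∑ s, a s * v s j * w s k = if k = j then 1 else 0 := by
    intro j k
    rw [← hL j k, hψ]
    calc ∑ s, a s * v s j * w s k = ∑ s, ∑ i, u s i * e i * (v s j * w s k) := by
          refine Finset.sum_congr rfl fun s _ => ?_
          simp only [ha_def]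
          rw [Finset.sum_mul, Finset.sum_mul]
          exact Finset.sum_congr rfl fun i _ => by ring
      _ = ∑ i, ∑ s, u s i * e i * (v s j * w s k) := Finset.sum_comm
      _ = ∑ i, (∑ s, u s i * v s j * w s k) * e i := by
          refine Finset.sum_congr rfl fun i _ => ?_
          rw [Finset.sum_mul]
          exact Finset.sum_congr rfl fun s _ => by ring
  have hUW : ∀ i k, ∑ s, b s * u s i * w s k = if k = i then 1 else 0 := by
    intro i k
    rw [← hR i k, hψ]
    calc ∑ s, b s * u s i * w s k = ∑ s, ∑ j, v s j * e j * (u s i * w s k) := by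
          refine Finset.sum_congr rfl fun s _ => ?_
          simp only [hb_def]
          rw [Finset.sum_mul, Finset.sum_mul]
          exact Finset.sum_congr rfl fun j _ => by ring
      _ = ∑ j, ∑ s, v s j * e j * (u s i * w s k) := Finset.sum_comm
      _ = ∑ j, (∑ s, u s i * v s j * w s k) * e j := by
          refine Finset.sum_congr rfl fun j _ => ?_
          rw [Finset.sum_mul]
          exact Finset.sum_congr rfl fun s _ => by ring
  set Vt : Matrix (Fin n) (Fin n) ℂ := Matrix.of fun j s => a s * v s j with hVt_def
  set Ut : Matrix (Fin n) (Fin n) ℂ := Matrix.of fun i s => b s * u s i with hUt_def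
  set W : Matrix (Fin n) (Fin n) ℂ := Matrix.of fun s k => w s k with hW_def
  have hVtW : Vt * W = 1 := by
    ext j k
    simp only [Matrix.mul_apply, hVt_def, hW_def, Matrix.of_apply, Matrix.one_apply]
    rw [hVW j k]
    simp [eq_comm]
  have hUtW : Ut * W = 1 := by
    ext i k
    simp only [Matrix.mul_apply, hUt_def, hW_def, Matrix.of_apply, Matrix.one_apply]
    rw [hUW i k]
    simp [eq_comm]
  have hWVt : W * Vt = 1 := mul_eq_one_comm.mp hVtW
  have hUtVt : Ut = Vt := by
    calc Ut = Ut * (W * Vt) := by rw [hWVt, mul_one]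
      _ = (Ut * W) * Vt := by rw [mul_assoc]
      _ = Vt := by rw [hUtW, one_mul]
  have hBA : ∀ s i, b s * u s i = a s * v s i := by
    intro s i
    have h2 := congrFun (congrFun hUtVt i) s
    simpa [hUt_def, hVt_def] using h2
  have ha : ∀ s, a s ≠ 0 := by
    intro s h0
    have h2 := congrFun (congrFun hWVt s) s
    simp only [Matrix.mul_apply, hVt_def, hW_def, Matrix.of_apply, Matrix.one_apply,
      if_pos rfl] at h2
    rw [Finset.sum_congr rfl (fun k _ => by rw [h0]; ring : ∀ k ∈ Finset.univ,
      w s k * (a s * v s k) = 0)] at h2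
    simp at h2
  have hb : ∀ s, b s ≠ 0 := by
    intro s h0
    have hWUt : W * Ut = 1 := mul_eq_one_comm.mp hUtW
    have h2 := congrFun (congrFun hWUt s) s
    simp only [Matrix.mul_apply, hUt_def, hW_def, Matrix.of_apply, Matrix.one_apply,
      if_pos rfl] at h2
    rw [Finset.sum_congr rfl (fun k _ => by rw [h0]; ring : ∀ k ∈ Finset.univ,
      w s k * (b s * u s k) = 0)] at h2
    simp at h2
  -- the group element
  set g : Matrix (Fin n) (Fin n) ℂ := Matrix.of fun k s => w s k * (a s * b s) with hg_def
  set h : Matrix (Fin n) (Fin n) ℂ := Matrix.of fun s i => (b s)⁻¹ * v s i with hh_def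
  have hgh : g * h = 1 := by
    ext k i
    simp only [Matrix.mul_apply, hg_def, hh_def, Matrix.of_apply, Matrix.one_apply]
    have : ∀ s, w s k * (a s * b s) * ((b s)⁻¹ * v s i) = a s * v s i * w s k := by
      intro s
      have hbb : b s * (b s)⁻¹ = 1 := mul_inv_cancel₀ (hb s)
      calc w s k * (a s * b s) * ((b s)⁻¹ * v s i)
          = (b s * (b s)⁻¹) * (a s * v s i * w s k) := by ring
        _ = a s * v s i * w s k := by rw [hbb, one_mul]
    rw [Finset.sum_congr rfl fun s _ => this s, hVW i k]
  have hhg : h * g = 1 := mul_eq_one_comm.mp hgh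
  refine ⟨⟨g, h, hgh, hhg⟩, ?_⟩
  rw [hψ]
  funext i j k
  show ∑ s, u s i * v s j * w s k = ∑ p, ∑ q, ∑ c, h p i * h q j * g k c * diagMul n p q c
  have hcollapse : ∀ p : Fin n, ∑ q, ∑ c, h p i * h q j * g k c * diagMul n p q c
      = h p i * h p j * g k p := by
    intro p
    rw [Finset.sum_eq_single p]
    · rw [Finset.sum_eq_single p]
      · simp [diagMul]
      · intro c _ hc; simp [diagMul, hc.symm]
      · intro hc; exact absurd (Finset.mem_univ p) hc
    · intro q _ hq
      rw [Finset.sum_eq_single q]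
      · have hpq : p ≠ q := fun h1 => hq h1.symm
        simp [diagMul, hpq]
      · intro c _ hc
        have hpq : p ≠ q := fun h1 => hq h1.symm
        simp [diagMul, hpq]
      · intro hc; exact absurd (Finset.mem_univ q) hc
    · intro hc; exact absurd (Finset.mem_univ p) hc
  rw [Finset.sum_congr rfl fun p _ => hcollapse p]
  refine Finset.sum_congr rfl fun s _ => ?_
  simp only [hg_def, hh_def, Matrix.of_apply]
  have hbs := hb s
  have hu : u s i = (b s)⁻¹ * (a s * v s i) := by
    rw [← hBA s i, inv_mul_cancel_left₀ hbs]
  have hbb : b s * (b s)⁻¹ = 1 := mul_inv_cancel₀ hbs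
  calc u s i * v s j * w s k
      = (b s)⁻¹ * (a s * v s i) * v s j * w s k := by rw [hu]
    _ = (b s * (b s)⁻¹) * ((b s)⁻¹ * (a s * v s i) * v s j * w s k) := by
        rw [hbb, one_mul]
    _ = (b s)⁻¹ * v s i * ((b s)⁻¹ * v s j) * (w s k * (a s * b s)) := by ring

/-- A unital bilinear map of border rank at most `n` lies in the closure of
the orbit of the diagonal multiplication. -/
lemma mem_closure_orbit_of_unital {n : ℕ} {φ : Fin n → Fin n → Fin n → ℂ}
    (hU : IsUnitalBil φ) (hcl : φ ∈ closure {S | rankLE S n}) :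
    φ ∈ closure (BilOrbit (diagMul n)) := by
  classical
  obtain ⟨e, he⟩ := hU
  obtain ⟨x, hxA, hxlim⟩ := mem_closure_iff_seq_limit.mp hcl
  have hLφ : Lmat e φ = 1 := Lmat_of_unital fun y => (he y).1
  have hRφ : Rmat e φ = 1 := Rmat_of_unital fun y => (he y).2
  have hcontL : Continuous fun S : Fin n → Fin n → Fin n → ℂ => Lmat e S := by
    refine continuous_matrix fun k j => ?_
    simp only [Lmat, Matrix.of_apply]
    fun_prop
  have hcontR : Continuous fun S : Fin n → Fin n → Fin n → ℂ => Rmat e S := by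
    refine continuous_matrix fun k i => ?_
    simp only [Rmat, Matrix.of_apply]
    fun_prop
  have hLt : Filter.Tendsto (fun t => Lmat e (x t)) Filter.atTop (nhds 1) := by
    have := (hcontL.tendsto φ).comp hxlim
    rwa [hLφ] at this
  have hRt : Filter.Tendsto (fun t => Rmat e (x t)) Filter.atTop (nhds 1) := by
    have := (hcontR.tendsto φ).comp hxlim
    rwa [hRφ] at this
  have hinv_cont : ContinuousAt Inv.inv (1 : Matrix (Fin n) (Fin n) ℂ) := by
    apply continuousAt_matrix_inv
    rw [Matrix.det_one]
    simpa using NormedRing.inverse_continuousAt (1 : ℂˣ)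
  have hLinv : Filter.Tendsto (fun t => (Lmat e (x t))⁻¹) Filter.atTop (nhds 1) := by
    have := hinv_cont.tendsto.comp hLt
    rwa [inv_one] at this
  have hRinv : Filter.Tendsto (fun t => (Rmat e (x t))⁻¹) Filter.atTop (nhds 1) := by
    have := hinv_cont.tendsto.comp hRt
    rwa [inv_one] at this
  have htr : Continuous fun M : Matrix (Fin n) (Fin n) ℂ => Mᵀ :=
    Continuous.matrix_transpose continuous_id
  have hLTinv : Filter.Tendsto (fun t => ((Lmat e (x t))⁻¹)ᵀ) Filter.atTop (nhds 1) := by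
    have := (htr.tendsto 1).comp hLinv
    rwa [Matrix.transpose_one] at this
  have hRTinv : Filter.Tendsto (fun t => ((Rmat e (x t))⁻¹)ᵀ) Filter.atTop (nhds 1) := by
    have := (htr.tendsto 1).comp hRinv
    rwa [Matrix.transpose_one] at this
  set ψ : ℕ → Fin n → Fin n → Fin n → ℂ :=
    fun t => restrict3 ((Rmat e (x t))⁻¹)ᵀ ((Lmat e (x t))⁻¹)ᵀ 1 (x t) with hψ_def
  have hψlim : Filter.Tendsto ψ Filter.atTop (nhds φ) := by
    have h0 : Filter.Tendsto
        (fun t => (((Rmat e (x t))⁻¹)ᵀ, (((Lmat e (x t))⁻¹)ᵀ, x t)))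
        Filter.atTop (nhds (1, (1, φ))) :=
      hRTinv.prodMk_nhds (hLTinv.prodMk_nhds hxlim)
    have h1 := (continuous_restrict3_param.tendsto (1, (1, φ))).comp h0
    rwa [show restrict3 (1 : Matrix (Fin n) (Fin n) ℂ) (1 : Matrix (Fin n) (Fin n) ℂ)
      (1 : Matrix (Fin n) (Fin n) ℂ) φ = φ from restrict3_one φ] at h1
  have hdetL : Filter.Tendsto (fun t => (Lmat e (x t)).det) Filter.atTop (nhds 1) := by
    have := ((continuous_id.matrix_det).tendsto (1 : Matrix (Fin n) (Fin n) ℂ)).comp hLt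
    simpa [Matrix.det_one, Function.comp_def] using this
  have hdetR : Filter.Tendsto (fun t => (Rmat e (x t)).det) Filter.atTop (nhds 1) := by
    have := ((continuous_id.matrix_det).tendsto (1 : Matrix (Fin n) (Fin n) ℂ)).comp hRt
    simpa [Matrix.det_one, Function.comp_def] using this
  have hev : ∀ᶠ t in Filter.atTop,
      IsUnit (Lmat e (x t)).det ∧ IsUnit (Rmat e (x t)).det :=
    ((hdetL.eventually_ne one_ne_zero).and (hdetR.eventually_ne one_ne_zero)).mono
      fun t ht => ⟨isUnit_iff_ne_zero.mpr ht.1, isUnit_iff_ne_zero.mpr ht.2⟩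
  set χ : ℕ → Fin n → Fin n → Fin n → ℂ := fun t =>
    if h : IsUnit (Lmat e (x t)).det ∧ IsUnit (Rmat e (x t)).det then ψ t
    else diagMul n with hχ_def
  have hχmem : ∀ t, χ t ∈ BilOrbit (diagMul n) := by
    intro t
    by_cases h : IsUnit (Lmat e (x t)).det ∧ IsUnit (Rmat e (x t)).det
    · simp only [hχ_def, dif_pos h]
      exact mem_orbit_of_unital_rankLE
        (unital_of_invertible (x t) e e h.1 h.2)
        (restrict3_rankLE _ _ _ (hxA t))
    · simp only [hχ_def, dif_neg h]
      exact diagMul_mem_orbit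
  have hχlim : Filter.Tendsto χ Filter.atTop (nhds φ) := by
    refine hψlim.congr' ?_
    filter_upwards [hev] with t ht
    simp only [hχ_def, dif_pos ht]
  exact mem_closure_of_tendsto hχlim (Filter.Eventually.of_forall hχmem)

end

end AuxBL

/-- a binding tensor has border rank at most `n` iff it is
equivalent to the structure tensor of a smoothable algebra, i.e. of a unital
bilinear map lying in the closure of the `GL(ℂⁿ)`-orbit of the coordinatewise
multiplication of `ℂⁿ`. -/
theorem stmt5 {n : ℕ} (T : Fin n → Fin n → Fin n → ℂ) (hT : Binding T) :
    bRank T ≤ n ↔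
      ∃ φ : Fin n → Fin n → Fin n → ℂ, IsUnitalBil φ ∧
        φ ∈ closure (BilOrbit (diagMul n)) ∧ EquivTensor φ T := by
  classical
  constructor
  · intro hbr
    obtain ⟨⟨α₁, hα₁⟩, ⟨α₂, hα₂⟩⟩ := hT
    have hLdet : IsUnit (AuxBL.Lmat α₁ T).det := by
      have h2 : (AuxBL.Lmat α₁ T).transpose = Matrix.of fun j k => ∑ i, α₁ i * T i j k := by
        ext j k
        simp [AuxBL.Lmat, Matrix.transpose_apply, mul_comm]
      rw [← Matrix.det_transpose, h2]
      exact AuxBL.isUnit_det_of_mrank_eq hα₁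
    have hRdet : IsUnit (AuxBL.Rmat α₂ T).det := by
      have h2 : (AuxBL.Rmat α₂ T).transpose = Matrix.of fun i k => ∑ j, α₂ j * T i j k := by
        ext i k
        simp [AuxBL.Rmat, Matrix.transpose_apply, mul_comm]
      rw [← Matrix.det_transpose, h2]
      exact AuxBL.isUnit_det_of_mrank_eq hα₂
    set P : Matrix (Fin n) (Fin n) ℂ := ((AuxBL.Rmat α₂ T)⁻¹).transpose with hP_def
    set Q : Matrix (Fin n) (Fin n) ℂ := ((AuxBL.Lmat α₁ T)⁻¹).transpose with hQ_def
    have hPdet : IsUnit P.det := by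
      rw [hP_def, Matrix.det_transpose]
      exact Matrix.isUnit_nonsing_inv_det _ hRdet
    have hQdet : IsUnit Q.det := by
      rw [hQ_def, Matrix.det_transpose]
      exact Matrix.isUnit_nonsing_inv_det _ hLdet
    have hUn : IsUnitalBil (AuxBL.restrict3 P Q (1 : Matrix (Fin n) (Fin n) ℂ) T) :=
      AuxBL.unital_of_invertible T α₁ α₂ hLdet hRdet
    have hTcl : T ∈ closure {S | rankLE S n} := AuxBL.bRank_le_iff.mp hbr
    have hφcl : AuxBL.restrict3 P Q (1 : Matrix (Fin n) (Fin n) ℂ) T ∈ closure {S | rankLE S n} :=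
      AuxBL.mem_closure_rankLE_restrict3 _ _ _ hTcl
    refine ⟨AuxBL.restrict3 P Q (1 : Matrix (Fin n) (Fin n) ℂ) T, hUn,
      AuxBL.mem_closure_orbit_of_unital hUn hφcl,
      AuxBL.restriction_restrict3 _ _ _ T, ⟨P⁻¹, Q⁻¹, (1 : Matrix (Fin n) (Fin n) ℂ), ?_⟩⟩
    show T = AuxBL.restrict3 P⁻¹ Q⁻¹ (1 : Matrix (Fin n) (Fin n) ℂ) (AuxBL.restrict3 P Q (1 : Matrix (Fin n) (Fin n) ℂ) T)
    rw [AuxBL.restrict3_comp, Matrix.nonsing_inv_mul _ hPdet,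
      Matrix.nonsing_inv_mul _ hQdet, one_mul, AuxBL.restrict3_one]
  · rintro ⟨φ, hUn, hcl, hrφT, hrTφ⟩
    obtain ⟨F₁, F₂, F₃, hF⟩ := hrTφ
    have hφ : φ ∈ closure {S | rankLE S n} :=
      closure_mono (fun S hS => AuxBL.orbit_rankLE hS) hcl
    refine AuxBL.bRank_le_iff.mpr ?_
    rw [show T = AuxBL.restrict3 F₁ F₂ F₃ φ from hF]
    exact AuxBL.mem_closure_rankLE_restrict3 _ _ _ hφ
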